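/- Define p_0 = 1, p_1 = 1, and p_{m+2} = p_m + p_{m+1}/(m+1). Then for all k ≥ 1, p_{2k} = (2k)!! / (2k-1)!!, where n!! denotes the double factorial. -/

import Mathlib

theorem stmt_12 (p : ℕ → ℚ)
    (hp0 : p 0 = 1) (hp1 : p 1 = 1)
    (hp : ∀ m : ℕ, p (m + 2) = p m + p (m + 1) / (m + 1)) :
    ∀ k : ℕ, 1 ≤ k →
      p (2 * k) = (Nat.doubleFactorial (2 * k) : ℚ) / (Nat.doubleFactorial (2 * k - 1) : ℚ) := by
  have key : ∀ k : ℕ,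
      p (2*k+2) = (Nat.doubleFactorial (2*k+2) : ℚ) / (Nat.doubleFactorial (2*k+1) : ℚ) ∧
      p (2*k+3) = p (2*k+2) := by
    intro k
    induction k with
    | zero =>
      have h2 := hp 0
      rw [hp0, hp1] at h2
      norm_num at h2
      have h3 := hp 1
      rw [hp1, h2] at h3
      norm_num at h3
      refine ⟨?_, by rw [h3, h2]⟩
      simp [h2, Nat.doubleFactorial]
    | succ n ih =>
      obtain ⟨h2, h3⟩ := ih
      have hd1 : (Nat.doubleFactorial (2*n+1) : ℚ) ≠ 0 :=
        Nat.cast_ne_zero.mpr (Nat.doubleFactorial_pos _).ne'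
      have hc3 : ((2*n+3 : ℕ) : ℚ) ≠ 0 := by positivity
      have hc4 : ((2*n+4 : ℕ) : ℚ) ≠ 0 := by positivity
      have e4 : p (2*n+4) = (Nat.doubleFactorial (2*n+4) : ℚ) / (Nat.doubleFactorial (2*n+3) : ℚ) := by
        have h := hp (2*n+2)
        have hc : ((2*n+2 : ℕ) : ℚ) + 1 = ((2*n+3 : ℕ) : ℚ) := by push_cast; ring
        rw [show 2*n+2+2 = 2*n+4 from rfl, show 2*n+2+1 = 2*n+3 from rfl, hc] at h
        rw [h, h3, h2]
        rw [show (2*n+4).doubleFactorial = (2*n+4) * (2*n+2).doubleFactorial from Nat.doubleFactorial_add_two (2*n+2),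
            show (2*n+3).doubleFactorial = (2*n+3) * (2*n+1).doubleFactorial from Nat.doubleFactorial_add_two (2*n+1)]
        push_cast
        field_simp
        ring
      have e5 : p (2*n+5) = p (2*n+4) := by
        have h := hp (2*n+3)
        have hc : ((2*n+3 : ℕ) : ℚ) + 1 = ((2*n+4 : ℕ) : ℚ) := by push_cast; ring
        rw [show 2*n+3+2 = 2*n+5 from rfl, show 2*n+3+1 = 2*n+4 from rfl, hc] at h
        rw [h, h3, h2, e4]
        rw [show (2*n+4).doubleFactorial = (2*n+4) * (2*n+2).doubleFactorial from Nat.doubleFactorial_add_two (2*n+2),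
            show (2*n+3).doubleFactorial = (2*n+3) * (2*n+1).doubleFactorial from Nat.doubleFactorial_add_two (2*n+1)]
        push_cast
        field_simp
        ring
      exact ⟨by rw [show 2*(n+1)+2 = 2*n+4 from rfl]; exact e4,
             by rw [show 2*(n+1)+3 = 2*n+5 from rfl]; exact e5⟩
  intro k hk
  obtain ⟨j, rfl⟩ := Nat.exists_eq_add_of_le hk
  have h := (key j).1
  have e1 : 2 * (1 + j) = 2*j+2 := by ring
  have e2 : 2*j+2 - 1 = 2*j+1 := by omega
  rw [e1, e2]
  exact h
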